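/- Let A = C^{d_A} with d_A ≥ 3 and B = C^{d_B}. Fix an orthonormal basis {e_j} of A. For a unit vector φ ∈ A ⊗ B, define p(j|φ) = ⟨e_j| Tr_B(|φ⟩⟨φ|) |e_j⟩ and g(φ) = −Σ_j p(j|φ) log₂ p(j|φ). Then g is Lipschitz with constant at most √8 · log₂ d_A with respect to the Euclidean (Hilbert-space) norm on unit vectors. -/

import Mathlib

open scoped BigOperators ComplexOrder
open Matrix

noncomputable section

namespace QIT

variable {n : Type*} [Fintype n] [DecidableEq n]

/-- Density matrix of a pure state given by a unit vector. -/
def pureDM (φ : EuclideanSpace ℂ n) : Matrix n n ℂ :=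
  Matrix.of fun i j => φ i * (starRingEnd ℂ) (φ j)

/-- A density matrix: positive semidefinite with unit trace. -/
def DensityMatrix (ρ : Matrix n n ℂ) : Prop := ρ.PosSemidef ∧ ρ.trace = 1

/-- Von Neumann entropy (base 2), via the eigenvalues. -/
def vNEntropy (ρ : Matrix n n ℂ) : ℝ :=
  if h : ρ.IsHermitian then ∑ i, -(h.eigenvalues i * Real.logb 2 (h.eigenvalues i)) else 0

/-- Trace norm of a Hermitian matrix, via eigenvalues. -/
def traceNorm (M : Matrix n n ℂ) : ℝ :=
  if h : M.IsHermitian then ∑ i, |h.eigenvalues i| else 0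

/-- Operator (spectral) norm. -/
def opNorm (M : Matrix n n ℂ) : ℝ := ‖Matrix.toEuclideanCLM (𝕜 := ℂ) M‖

/-- Apply a real function to a Hermitian matrix via the spectral theorem. -/
def hermApply (f : ℝ → ℝ) (M : Matrix n n ℂ) : Matrix n n ℂ :=
  if h : M.IsHermitian then
    (h.eigenvectorUnitary : Matrix n n ℂ) * Matrix.diagonal (fun i => (f (h.eigenvalues i) : ℂ)) *
      (h.eigenvectorUnitary : Matrix n n ℂ)ᴴ
  else 0

/-- Matrix base-2 logarithm of a Hermitian matrix. -/
def mlog2 : Matrix n n ℂ → Matrix n n ℂ := hermApply (Real.logb 2)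

/-- Matrix square root of a positive semidefinite matrix. -/
def msqrt : Matrix n n ℂ → Matrix n n ℂ := hermApply Real.sqrt

/-- Quantum relative entropy `D(ρ‖σ) = Tr ρ (log₂ ρ − log₂ σ)`. -/
def relEnt (ρ σ : Matrix n n ℂ) : ℝ := ((ρ * (mlog2 ρ - mlog2 σ)).trace).re

/-- Uhlmann fidelity `F(ρ,σ) = (Tr √(√ρ σ √ρ))²`. -/
def fidelity (ρ σ : Matrix n n ℂ) : ℝ := (((msqrt (msqrt ρ * σ * msqrt ρ)).trace).re) ^ 2

/-- A projector. -/
def Projector (P : Matrix n n ℂ) : Prop := P.IsHermitian ∧ P * P = P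

variable {dA dB : ℕ}

/-- Partial trace over the second factor. -/
def ptraceB (ρ : Matrix (Fin dA × Fin dB) (Fin dA × Fin dB) ℂ) : Matrix (Fin dA) (Fin dA) ℂ :=
  Matrix.of fun a a' => ∑ b, ρ (a, b) (a', b)

/-- Partial trace over the first factor. -/
def ptraceA (ρ : Matrix (Fin dA × Fin dB) (Fin dA × Fin dB) ℂ) : Matrix (Fin dB) (Fin dB) ℂ :=
  Matrix.of fun b b' => ∑ a, ρ (a, b) (a, b')

/-- Kronecker (tensor) product of operators on the two factors. -/
def kron (P : Matrix (Fin dA) (Fin dA) ℂ) (Q : Matrix (Fin dB) (Fin dB) ℂ) :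
    Matrix (Fin dA × Fin dB) (Fin dA × Fin dB) ℂ :=
  Matrix.of fun x y => P x.1 y.1 * Q x.2 y.2

/-- Partial transpose on the second factor. -/
def ptransposeB (ρ : Matrix (Fin dA × Fin dB) (Fin dA × Fin dB) ℂ) :
    Matrix (Fin dA × Fin dB) (Fin dA × Fin dB) ℂ :=
  Matrix.of fun x y => ρ (x.1, y.2) (y.1, x.2)

/-- Bipartite separability. -/
def Separable (ρ : Matrix (Fin dA × Fin dB) (Fin dA × Fin dB) ℂ) : Prop :=
  ∃ (m : ℕ) (p : Fin m → ℝ) (a : Fin m → Matrix (Fin dA) (Fin dA) ℂ)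
    (b : Fin m → Matrix (Fin dB) (Fin dB) ℂ),
    (∀ l, 0 ≤ p l) ∧ (∑ l, p l = 1) ∧
    (∀ l, (a l).PosSemidef ∧ (a l).trace = 1) ∧
    (∀ l, (b l).PosSemidef ∧ (b l).trace = 1) ∧
    ρ = ∑ l, (p l : ℂ) • kron (a l) (b l)

/-- Entanglement of formation. -/
def EoF (ρ : Matrix (Fin dA × Fin dB) (Fin dA × Fin dB) ℂ) : ℝ :=
  sInf { x : ℝ | ∃ (m : ℕ) (p : Fin m → ℝ) (φ : Fin m → EuclideanSpace ℂ (Fin dA × Fin dB)),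
    (∀ l, 0 ≤ p l) ∧ (∑ l, p l = 1) ∧ (∀ l, ‖φ l‖ = 1) ∧
    (ρ = ∑ l, (p l : ℂ) • pureDM (φ l)) ∧
    x = ∑ l, p l * vNEntropy (ptraceB (pureDM (φ l))) }

end QIT

/-- The measured entropy `g(φ) = −Σ_j p(j|φ) log₂ p(j|φ)` in the standard basis of `A`. -/
noncomputable def measuredEntropy (dA dB : ℕ) (φ : EuclideanSpace ℂ (Fin dA × Fin dB)) : ℝ :=
  ∑ j : Fin dA,
    -(((QIT.ptraceB (QIT.pureDM φ)) j j).re * Real.logb 2 ((QIT.ptraceB (QIT.pureDM φ)) j j).re)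

open Real

lemma pw_exp_aux : ∀ u : ℝ, 1 ≤ u → Real.exp (-u) * (u - 1) ^ 2 ≤ 4 * Real.exp (-3) := by
  intro u hu1
  have key : (u - 1) ^ 2 ≤ 4 * Real.exp (u - 3) := by
    have h2 : (u - 3) / 2 + 1 ≤ Real.exp ((u - 3) / 2) := Real.add_one_le_exp _
    have h3 : (0 : ℝ) ≤ (u - 3) / 2 + 1 := by linarith
    have h4 : ((u - 3) / 2 + 1) ^ 2 ≤ Real.exp ((u - 3) / 2) ^ 2 :=
      pow_le_pow_left₀ h3 h2 2
    have h5 : Real.exp ((u - 3) / 2) ^ 2 = Real.exp (u - 3) := by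
      rw [sq, ← Real.exp_add]; ring_nf
    nlinarith
  have hpos : (0 : ℝ) < Real.exp (-u) := Real.exp_pos _
  calc Real.exp (-u) * (u - 1) ^ 2 ≤ Real.exp (-u) * (4 * Real.exp (u - 3)) :=
        mul_le_mul_of_nonneg_left key hpos.le
    _ = 4 * Real.exp (-3) := by
        rw [← mul_assoc, mul_comm (Real.exp (-u)) 4, mul_assoc, ← Real.exp_add]
        ring_nf

lemma pw_small {y : ℝ} (h0 : 0 ≤ y) (h1 : y ≤ 1) :
    y * (1 + Real.log y) ^ 2 ≤ y + 4 * Real.exp (-3) := by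
  rcases eq_or_lt_of_le h0 with h | h
  · simp only [← h, Real.log_zero, zero_mul, zero_add]
    positivity
  rcases le_or_gt (Real.exp (-1)) y with hy | hy
  · have hl1 : (-1 : ℝ) ≤ Real.log y := by
      have := Real.log_le_log (Real.exp_pos (-1)) hy
      simpa using this
    have hl0 : Real.log y ≤ 0 := Real.log_nonpos h0 h1
    nlinarith [Real.exp_pos (-3 : ℝ),
      mul_nonneg (mul_nonneg h0 (neg_nonneg.mpr hl0)) (by linarith : (0:ℝ) ≤ 2 + Real.log y)]
  · have hu1 : 1 ≤ -Real.log y := by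
      have : Real.log y ≤ Real.log (Real.exp (-1)) := Real.log_le_log h hy.le
      simp only [Real.log_exp] at this
      linarith
    have h7 : y * (1 + Real.log y) ^ 2
        = Real.exp (-(-Real.log y)) * ((-Real.log y) - 1) ^ 2 := by
      rw [neg_neg, Real.exp_log h]; ring
    rw [h7]
    have := pw_exp_aux (-Real.log y) hu1
    linarith

open Real Set

/-- derivative of `y (1 - log y)²` is `(log y)² - 1`. -/
lemma hasDerivAt_hfun {y : ℝ} (hy : 0 < y) :
    HasDerivAt (fun z : ℝ => z * (1 - Real.log z) ^ 2) (Real.log y ^ 2 - 1) y := by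
  have hlog : HasDerivAt Real.log y⁻¹ y := Real.hasDerivAt_log hy.ne'
  have h1 : HasDerivAt (fun z : ℝ => 1 - Real.log z) (-y⁻¹) y := by
    simpa using (hasDerivAt_const y (1:ℝ)).fun_sub hlog
  have h2 : HasDerivAt (fun z : ℝ => (1 - Real.log z) ^ 2)
      (2 * (1 - Real.log y) ^ 1 * (-y⁻¹)) y := h1.pow 2
  have h3 := (hasDerivAt_id y).fun_mul h2
  refine h3.congr_deriv ?_
  have : y ≠ 0 := hy.ne'
  rw [id]
  field_simp
  ring

/-- tangent-line bound for the concave function `h(y) = y (1 - log y)²` at `m = 1/d`. -/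
lemma tangent_bound {d : ℝ} (hd : 1 ≤ d) {y : ℝ} (h0 : 0 ≤ y) (h1 : y ≤ 1) :
    y * (1 - Real.log y) ^ 2
      ≤ (1 / d) * (1 + Real.log d) ^ 2 + (Real.log d ^ 2 - 1) * (y - 1 / d) := by
  have hdpos : (0:ℝ) < d := lt_of_lt_of_le one_pos hd
  set m : ℝ := 1 / d with hm
  have hmpos : 0 < m := by positivity
  have hm1 : m ≤ 1 := by rw [hm]; rw [div_le_one hdpos]; exact hd
  have hlogm : Real.log m = -Real.log d := by rw [hm, one_div, Real.log_inv]
  have hL0 : 0 ≤ Real.log d := Real.log_nonneg hd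
  set φ : ℝ → ℝ := fun z =>
    m * (1 + Real.log d) ^ 2 + (Real.log d ^ 2 - 1) * (z - m) - z * (1 - Real.log z) ^ 2
    with hφ
  have hφderiv : ∀ z ∈ Ioi (0:ℝ), HasDerivAt φ (Real.log d ^ 2 - Real.log z ^ 2) z := by
    intro z hz
    have h := ((hasDerivAt_const z (m * (1 + Real.log d) ^ 2)).fun_add
      (((hasDerivAt_id z).sub_const m).const_mul (Real.log d ^ 2 - 1))).fun_sub
      (hasDerivAt_hfun hz)
    refine h.congr_deriv ?_
    ring
  have hφm : φ m = 0 := by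
    rw [hφ]; simp only [hlogm]; ring
  -- continuity of φ on positive reals
  have hφcont : ContinuousOn φ (Ioi (0:ℝ)) := by
    intro z hz
    exact ((hφderiv z hz).continuousAt).continuousWithinAt
  suffices h : 0 ≤ φ y by
    have h2 : 0 ≤ m * (1 + Real.log d) ^ 2 + (Real.log d ^ 2 - 1) * (y - m)
        - y * (1 - Real.log y) ^ 2 := h
    linarith
  rcases eq_or_lt_of_le h0 with h | hypos
  · -- y = 0
    rw [hφ, ← h]
    simp only [Real.log_zero, sub_zero, one_pow, mul_one, zero_mul, zero_sub, sub_zero]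
    nlinarith [hmpos, hL0]
  rcases le_total y m with hym | hmy
  · -- antitone on [y, m]
    have : AntitoneOn φ (Icc y m) := by
      apply antitoneOn_of_deriv_nonpos (convex_Icc y m)
      · exact hφcont.mono (fun z hz => lt_of_lt_of_le hypos hz.1)
      · intro z hz
        rw [interior_Icc] at hz
        exact ((hφderiv z (lt_trans hypos hz.1)).differentiableAt).differentiableWithinAt
      · intro z hz
        rw [interior_Icc] at hz
        have hzpos : 0 < z := lt_trans hypos hz.1
        rw [(hφderiv z hzpos).deriv]
        have hlz : Real.log z ≤ -Real.log d := by
          rw [← hlogm]; exact Real.log_le_log hzpos hz.2.le |>.trans_eq rfl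
        nlinarith [hL0]
    have := this (left_mem_Icc.mpr hym) (right_mem_Icc.mpr hym) hym
    rw [hφm] at this; linarith
  · -- monotone on [m, y]
    have : MonotoneOn φ (Icc m y) := by
      apply monotoneOn_of_deriv_nonneg (convex_Icc m y)
      · exact hφcont.mono (fun z hz => lt_of_lt_of_le hmpos hz.1)
      · intro z hz
        rw [interior_Icc] at hz
        exact ((hφderiv z (lt_trans hmpos hz.1)).differentiableAt).differentiableWithinAt
      · intro z hz
        rw [interior_Icc] at hz
        have hzpos : 0 < z := lt_trans hmpos hz.1
        rw [(hφderiv z hzpos).deriv]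
        have hlz1 : -Real.log d ≤ Real.log z := by
          rw [← hlogm]; exact Real.log_le_log hmpos hz.1.le
        have hlz2 : Real.log z ≤ 0 := Real.log_nonpos hzpos.le (le_trans hz.2.le h1)
        nlinarith
    have := this (left_mem_Icc.mpr hmy) (right_mem_Icc.mpr hmy) hmy
    rw [hφm] at this; linarith

open Real Finset in
lemma key_sum {d : ℕ} (hd : 3 ≤ d) (x : Fin d → ℝ) (hx : ∀ j, 0 ≤ x j)
    (hs : ∑ j, x j ≤ 1) :
    ∑ j, x j * (1 + Real.log (x j)) ^ 2 ≤ 2 * Real.log d ^ 2 := by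
  have hdr1 : (1:ℝ) ≤ (d:ℝ) := by exact_mod_cast (by omega : 1 ≤ d)
  have hdr : (3:ℝ) ≤ (d:ℝ) := by exact_mod_cast hd
  have hx1 : ∀ j, x j ≤ 1 := by
    intro j
    have h := Finset.single_le_sum (f := x) (fun i _ => hx i) (Finset.mem_univ j)
    linarith
  have hlog2 : (0.6931471803 : ℝ) < Real.log 2 := Real.log_two_gt_d9
  have hlog3 : (1.0397207 : ℝ) ≤ Real.log 3 := by
    have h98 : ((2:ℝ) ^ 3) ≤ (3:ℝ) ^ 2 := by norm_num
    have h1 : Real.log ((2:ℝ) ^ 3) ≤ Real.log ((3:ℝ) ^ 2) :=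
      Real.log_le_log (by norm_num) h98
    rw [Real.log_pow, Real.log_pow] at h1
    push_cast at h1
    linarith
  by_cases h16 : 16 ≤ d
  · -- large d : tangent bound
    set L := Real.log d with hL'
    have hL : (2.772 : ℝ) ≤ L := by
      have h1 : Real.log (16:ℝ) ≤ Real.log d := by
        apply Real.log_le_log (by norm_num)
        exact_mod_cast h16
      have h2 : Real.log (16:ℝ) = 4 * Real.log 2 := by
        rw [show (16:ℝ) = 2 ^ 4 by norm_num, Real.log_pow]; push_cast; ring
      linarith
    have hstep : ∀ j, x j * (1 + Real.log (x j)) ^ 2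
        ≤ (1 / d) * (1 + L) ^ 2 + (L ^ 2 - 1) * (x j - 1 / d) := by
      intro j
      have hl0 : Real.log (x j) ≤ 0 := Real.log_nonpos (hx j) (hx1 j)
      have hsh : x j * (1 + Real.log (x j)) ^ 2 ≤ x j * (1 - Real.log (x j)) ^ 2 := by
        apply mul_le_mul_of_nonneg_left _ (hx j)
        nlinarith
      exact hsh.trans (tangent_bound hdr1 (hx j) (hx1 j))
    have hsum2 : ∑ j, x j * (1 + Real.log (x j)) ^ 2
        ≤ ∑ j : Fin d, ((1 / d) * (1 + L) ^ 2 + (L ^ 2 - 1) * (x j - 1 / d)) :=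
      Finset.sum_le_sum fun j _ => hstep j
    have e : ∑ j : Fin d, ((1 / d) * (1 + L) ^ 2 + (L ^ 2 - 1) * (x j - 1 / d))
        = (d:ℝ) * ((1 / d) * (1 + L) ^ 2) + (L ^ 2 - 1) * ((∑ j, x j) - (d:ℝ) * (1/d)) := by
      rw [Finset.sum_add_distrib, Finset.sum_const, ← Finset.mul_sum,
        Finset.sum_sub_distrib, Finset.sum_const]
      simp only [Finset.card_univ, Fintype.card_fin, nsmul_eq_mul]
    have hd0 : (d:ℝ) ≠ 0 := by linarith
    have e2 : (d:ℝ) * ((1:ℝ)/d) = 1 := by field_simp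
    rw [e, e2] at hsum2
    have hL2 : (0:ℝ) ≤ L ^ 2 - 1 := by nlinarith
    nlinarith [mul_nonneg hL2 (by linarith : (0:ℝ) ≤ 1 - ∑ j, x j)]
  · -- small d : pointwise linear bound
    push_neg at h16
    have hdr15 : (d:ℝ) ≤ 15 := by exact_mod_cast Nat.lt_succ_iff.mp h16
    have hsum2 : ∑ j, x j * (1 + Real.log (x j)) ^ 2
        ≤ (∑ j, x j) + (d:ℝ) * (4 * Real.exp (-3)) := by
      calc ∑ j, x j * (1 + Real.log (x j)) ^ 2
          ≤ ∑ j : Fin d, (x j + 4 * Real.exp (-3)) :=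
            Finset.sum_le_sum fun j _ => pw_small (hx j) (hx1 j)
        _ = (∑ j, x j) + (d:ℝ) * (4 * Real.exp (-3)) := by
            rw [Finset.sum_add_distrib, Finset.sum_const]
            simp [Finset.card_univ, nsmul_eq_mul]
    have hexp3 : Real.exp (-3:ℝ) ≤ 0.0498 := by
      rw [Real.exp_neg]
      rw [inv_le_comm₀ (Real.exp_pos 3) (by norm_num)]
      have h1 : (2.7182818283:ℝ) ^ (3:ℕ) ≤ Real.exp 1 ^ (3:ℕ) :=
        pow_le_pow_left₀ (by norm_num) Real.exp_one_gt_d9.le 3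
      have h2 : Real.exp 1 ^ (3:ℕ) = Real.exp 3 := by
        rw [← Real.exp_nat_mul]; norm_num
      rw [h2] at h1
      norm_num at h1 ⊢
      linarith
    have hlogd : Real.log 3 + ((d:ℝ) - 3) / 15 ≤ Real.log d := by
      have h1 : Real.log d = Real.log 3 + Real.log ((d:ℝ)/3) := by
        rw [← Real.log_mul (by norm_num) (by positivity)]
        congr 1
        field_simp
      have h2 : 1 - 3/(d:ℝ) ≤ Real.log ((d:ℝ)/3) := by
        have h3 : Real.log (3/(d:ℝ)) ≤ 3/(d:ℝ) - 1 :=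
          Real.log_le_sub_one_of_pos (by positivity)
        have h4 : Real.log ((d:ℝ)/3) = - Real.log (3/(d:ℝ)) := by
          rw [← Real.log_inv]
          congr 1
          field_simp
        linarith
      have h5 : ((d:ℝ) - 3) / 15 ≤ 1 - 3/(d:ℝ) := by
        have h0 : (0:ℝ) < (d:ℝ) := by linarith
        have e1 : 1 - 3/(d:ℝ) = ((d:ℝ)-3)/(d:ℝ) := by field_simp
        rw [e1]
        exact div_le_div_of_nonneg_left (by linarith) h0 hdr15
      linarith
    have hL3 : (1.0397207:ℝ) + ((d:ℝ)-3)/15 ≤ Real.log d := by linarith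
    have h6 : (d:ℝ) * (4 * Real.exp (-3)) ≤ (d:ℝ) * (4 * 0.0498) := by
      apply mul_le_mul_of_nonneg_left (by linarith) (by linarith)
    nlinarith [sq_nonneg (((d:ℝ)-3)/15), sq_nonneg (Real.log d)]
open Real Finset

section quad
variable {ι : Type*} [Fintype ι]

lemma normSq_affine (a c : ℂ) (t : ℝ) :
    Complex.normSq (a + (t:ℂ) * c)
      = Complex.normSq a + 2 * (a * (starRingEnd ℂ) c).re * t + Complex.normSq c * t ^ 2 := by
  simp [Complex.normSq_apply, Complex.add_re, Complex.add_im, Complex.mul_re, Complex.mul_im,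
    Complex.conj_re, Complex.conj_im, Complex.ofReal_re, Complex.ofReal_im]
  ring

lemma hasDerivAt_NN (a c : ι → ℂ) (t : ℝ) :
    HasDerivAt (fun s : ℝ => ∑ b, Complex.normSq (a b + (s:ℂ) * c b))
      (2 * ∑ b, ((a b + (t:ℂ) * c b) * (starRingEnd ℂ) (c b)).re) t := by
  have h : ∀ b : ι, HasDerivAt (fun s : ℝ => Complex.normSq (a b + (s:ℂ) * c b))
      (2 * ((a b + (t:ℂ) * c b) * (starRingEnd ℂ) (c b)).re) t := by
    intro b
    have hq : (fun s : ℝ => Complex.normSq (a b + (s:ℂ) * c b))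
        = fun s : ℝ => Complex.normSq (a b)
            + 2 * ((a b) * (starRingEnd ℂ) (c b)).re * s + Complex.normSq (c b) * s ^ 2 := by
      funext s; exact normSq_affine (a b) (c b) s
    rw [hq]
    have h1 : HasDerivAt (fun s : ℝ => Complex.normSq (a b)
        + 2 * ((a b) * (starRingEnd ℂ) (c b)).re * s + Complex.normSq (c b) * s ^ 2)
        (2 * ((a b) * (starRingEnd ℂ) (c b)).re + Complex.normSq (c b) * (2 * t)) t := by
      have ha := ((hasDerivAt_id t).const_mul (2 * ((a b) * (starRingEnd ℂ) (c b)).re)).const_add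
        (Complex.normSq (a b))
      have hb := (hasDerivAt_pow 2 t).const_mul (Complex.normSq (c b))
      simpa using ha.fun_add hb
    convert h1 using 1
    have he : ((a b + (t:ℂ) * c b) * (starRingEnd ℂ) (c b)).re
        = ((a b) * (starRingEnd ℂ) (c b)).re + t * Complex.normSq (c b) := by
      rw [add_mul, Complex.add_re]
      congr 1
      rw [mul_assoc, Complex.mul_conj]
      simp [Complex.mul_re]
    rw [he]; ring
  simpa [Finset.mul_sum] using HasDerivAt.fun_sum (fun b _ => h b)

lemma re_inner_sq_le (w c : ι → ℂ) :
    (∑ b, (w b * (starRingEnd ℂ) (c b)).re) ^ 2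
      ≤ (∑ b, Complex.normSq (w b)) * (∑ b, Complex.normSq (c b)) := by
  have h1 : |∑ b, (w b * (starRingEnd ℂ) (c b)).re|
      ≤ ∑ b, ‖w b‖ * ‖c b‖ := by
    refine (Finset.abs_sum_le_sum_abs _ _).trans (Finset.sum_le_sum fun b _ => ?_)
    calc |(w b * (starRingEnd ℂ) (c b)).re| ≤ ‖w b * (starRingEnd ℂ) (c b)‖ :=
          Complex.abs_re_le_norm _
      _ = ‖w b‖ * ‖c b‖ := by
          rw [norm_mul, Complex.norm_conj]
  have h2 : (∑ b, ‖w b‖ * ‖c b‖) ^ 2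
      ≤ (∑ b, ‖w b‖ ^ 2) * (∑ b, ‖c b‖ ^ 2) :=
    Finset.sum_mul_sq_le_sq_mul_sq _ _ _
  have h3 : (∑ b, (w b * (starRingEnd ℂ) (c b)).re) ^ 2
      ≤ (∑ b, ‖w b‖ * ‖c b‖) ^ 2 := by
    rw [← sq_abs]
    apply pow_le_pow_left₀ (abs_nonneg _) h1
  refine h3.trans (h2.trans_eq ?_)
  congr 1 <;> exact Finset.sum_congr rfl fun b _ => Complex.sq_norm _
end quad
open Real Finset

section deriv
variable {ι : Type*} [Fintype ι]

lemma sum_normSq_eq_zero_iff (w : ι → ℂ) :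
    ∑ b, Complex.normSq (w b) = 0 ↔ ∀ b, w b = 0 := by
  rw [Finset.sum_eq_zero_iff_of_nonneg (fun b _ => Complex.normSq_nonneg _)]
  simp [Complex.normSq_eq_zero]

lemma hasDerivAt_E_comp (a c : ι → ℂ) (t : ℝ)
    (hN0 : ∑ b, Complex.normSq (a b + (t:ℂ) * c b) = 0) (hC : 0 < ∑ b, Complex.normSq (c b)) :
    HasDerivAt (fun s : ℝ => Real.negMulLog (∑ b, Complex.normSq (a b + (s:ℂ) * c b))
      / Real.log 2) 0 t := by
  set C : ℝ := ∑ b, Complex.normSq (c b) with hCdef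
  have hz : ∀ b, a b + (t:ℂ) * c b = 0 := (sum_normSq_eq_zero_iff _).mp hN0
  have hNs : ∀ s : ℝ, ∑ b, Complex.normSq (a b + (s:ℂ) * c b) = C * (s - t) ^ 2 := by
    intro s
    have : ∀ b, a b + (s:ℂ) * c b = ((s - t : ℝ) : ℂ) * c b := by
      intro b
      have := hz b
      push_cast
      linear_combination this
    rw [Finset.sum_congr rfl fun b _ => by rw [this b]]
    simp only [Complex.normSq_mul, Complex.normSq_ofReal]
    rw [← Finset.mul_sum, ← hCdef]
    ring
  rw [hasDerivAt_iff_tendsto_slope]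
  set f : ℝ → ℝ := fun s => Real.negMulLog (∑ b, Complex.normSq (a b + (s:ℂ) * c b))
      / Real.log 2 with hf
  have hft : f t = 0 := by
    simp [hf, hN0, Real.negMulLog_zero]
  have t1 : Filter.Tendsto (fun s : ℝ => s - t) (nhdsWithin t {t}ᶜ) (nhds 0) := by
    have : Filter.Tendsto (fun s : ℝ => s - t) (nhds t) (nhds (t - t)) :=
      (continuous_id.sub continuous_const).tendsto t
    rw [sub_self] at this
    exact this.mono_left nhdsWithin_le_nhds
  have t2 : Filter.Tendsto (fun s : ℝ => (s - t) * Real.log (s - t))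
      (nhdsWithin t {t}ᶜ) (nhds 0) := by
    have hc : Filter.Tendsto (fun x : ℝ => x * Real.log x) (nhds 0) (nhds 0) := by
      have := Real.continuous_mul_log.tendsto 0
      simpa using this
    exact hc.comp t1
  have t3 : Filter.Tendsto
      (fun s : ℝ => -(C * ((s - t) * Real.log C + 2 * ((s - t) * Real.log (s - t))))
        / Real.log 2) (nhdsWithin t {t}ᶜ) (nhds 0) := by
    have h4 := ((t1.mul_const (Real.log C)).add (t2.const_mul 2)).const_mul C
    have h5 := (h4.neg).div_const (Real.log 2)
    simpa using h5
  refine Filter.Tendsto.congr' ?_ t3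
  filter_upwards [self_mem_nhdsWithin] with s hs
  have hst : s - t ≠ 0 := sub_ne_zero.mpr hs
  have hlog : Real.log (C * (s - t) ^ 2) = Real.log C + 2 * Real.log (s - t) := by
    rw [Real.log_mul hC.ne' (pow_ne_zero 2 hst), Real.log_pow]
    norm_num
  rw [slope_def_field]
  rw [hf]
  simp only [hN0, Real.negMulLog_zero, hNs s]
  rw [Real.negMulLog, hlog]
  field_simp
  ring
end deriv
open Real Finset

namespace MEL
variable {dA dB : ℕ}

noncomputable section

/-- block weight along the segment -/
def NN (φ dv : EuclideanSpace ℂ (Fin dA × Fin dB)) (j : Fin dA) (s : ℝ) : ℝ :=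
  ∑ b, Complex.normSq (φ (j, b) + (s:ℂ) * dv (j, b))

def BB (φ dv : EuclideanSpace ℂ (Fin dA × Fin dB)) (j : Fin dA) (t : ℝ) : ℝ :=
  ∑ b, ((φ (j, b) + (t:ℂ) * dv (j, b)) * (starRingEnd ℂ) (dv (j, b))).re

def CC (dv : EuclideanSpace ℂ (Fin dA × Fin dB)) (j : Fin dA) : ℝ :=
  ∑ b, Complex.normSq (dv (j, b))

def DD (φ dv : EuclideanSpace ℂ (Fin dA × Fin dB)) (j : Fin dA) (t : ℝ) : ℝ :=
  if NN φ dv j t = 0 then 0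
  else (-Real.log (NN φ dv j t) - 1) * (2 * BB φ dv j t) / Real.log 2

variable (φ dv : EuclideanSpace ℂ (Fin dA × Fin dB)) (j : Fin dA) (t : ℝ)

lemma NN_nonneg : 0 ≤ NN φ dv j t := Finset.sum_nonneg fun b _ => Complex.normSq_nonneg _

lemma CC_nonneg : 0 ≤ CC dv j := Finset.sum_nonneg fun b _ => Complex.normSq_nonneg _

lemma hasDerivAt_NN' : HasDerivAt (NN φ dv j) (2 * BB φ dv j t) t :=
  hasDerivAt_NN (fun b => φ (j, b)) (fun b => dv (j, b)) t

lemma BB_sq_le : (BB φ dv j t) ^ 2 ≤ NN φ dv j t * CC dv j :=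
  re_inner_sq_le (fun b => φ (j, b) + (t:ℂ) * dv (j, b)) (fun b => dv (j, b))

lemma hasDerivAt_DD :
    HasDerivAt (fun s => Real.negMulLog (NN φ dv j s) / Real.log 2) (DD φ dv j t) t := by
  by_cases h0 : NN φ dv j t = 0
  · rw [DD, if_pos h0]
    rcases eq_or_lt_of_le (CC_nonneg dv j) with hc | hc
    · -- dv block vanishes : constant function
      have hc0 : ∀ b, dv (j, b) = 0 := (sum_normSq_eq_zero_iff _).mp hc.symm
      have hconst : (fun s : ℝ => Real.negMulLog (NN φ dv j s) / Real.log 2)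
          = fun _ => Real.negMulLog (NN φ dv j t) / Real.log 2 := by
        funext s
        congr 2
        unfold NN
        refine Finset.sum_congr rfl fun b _ => ?_
        simp [hc0 b]
      rw [hconst]
      exact hasDerivAt_const t _
    · exact hasDerivAt_E_comp (fun b => φ (j, b)) (fun b => dv (j, b)) t h0 hc
  · rw [DD, if_neg h0]
    have h1 := (Real.hasDerivAt_negMulLog h0).comp t (hasDerivAt_NN' φ dv j t)
    have h2 := h1.div_const (Real.log 2)
    exact h2

lemma DD_bound :
    |DD φ dv j t| ≤ 2 / Real.log 2
      * (Real.sqrt (NN φ dv j t * (1 + Real.log (NN φ dv j t)) ^ 2) * Real.sqrt (CC dv j)) := by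
  have hlog2pos : (0:ℝ) < Real.log 2 := Real.log_pos (by norm_num)
  by_cases h0 : NN φ dv j t = 0
  · rw [DD, if_pos h0, abs_zero]
    positivity
  · rw [DD, if_neg h0]
    have hB : |BB φ dv j t| ≤ Real.sqrt (NN φ dv j t) * Real.sqrt (CC dv j) := by
      rw [← Real.sqrt_mul (NN_nonneg φ dv j t)]
      exact Real.abs_le_sqrt (BB_sq_le φ dv j t)
    have hsf : Real.sqrt (NN φ dv j t * (1 + Real.log (NN φ dv j t)) ^ 2)
        = Real.sqrt (NN φ dv j t) * |1 + Real.log (NN φ dv j t)| := by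
      rw [Real.sqrt_mul (NN_nonneg φ dv j t), Real.sqrt_sq_eq_abs]
    rw [hsf]
    rw [abs_div, abs_of_pos hlog2pos, div_le_iff₀ hlog2pos]
    have h1 : |(-Real.log (NN φ dv j t) - 1) * (2 * BB φ dv j t)|
        = |1 + Real.log (NN φ dv j t)| * (2 * |BB φ dv j t|) := by
      rw [abs_mul]
      congr 1
      · rw [← abs_neg]; congr 1; ring
      · rw [abs_mul, abs_two]
    rw [h1]
    have h2 : |1 + Real.log (NN φ dv j t)| * (2 * |BB φ dv j t|)
        ≤ |1 + Real.log (NN φ dv j t)| * (2 * (Real.sqrt (NN φ dv j t) * Real.sqrt (CC dv j))) := by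
      apply mul_le_mul_of_nonneg_left _ (abs_nonneg _)
      linarith
    refine h2.trans_eq ?_
    field_simp

end
end MEL

namespace MEL
variable {dA dB : ℕ}

lemma sum_normSq_eq_norm_sq (w : EuclideanSpace ℂ (Fin dA × Fin dB)) :
    ∑ p, Complex.normSq (w p) = ‖w‖ ^ 2 := by
  rw [EuclideanSpace.norm_eq, Real.sq_sqrt (Finset.sum_nonneg fun i _ => sq_nonneg _)]
  exact Finset.sum_congr rfl fun p _ => by
    rw [← Complex.sq_norm]

lemma CC_sum (dv : EuclideanSpace ℂ (Fin dA × Fin dB)) :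
    ∑ j, CC dv j = ‖dv‖ ^ 2 := by
  rw [← sum_normSq_eq_norm_sq dv, Fintype.sum_prod_type]
  rfl

lemma NN_sum_le (φ ψ : EuclideanSpace ℂ (Fin dA × Fin dB)) (hφ : ‖φ‖ = 1) (hψ : ‖ψ‖ = 1)
    {t : ℝ} (ht0 : 0 ≤ t) (ht1 : t ≤ 1) :
    ∑ j, NN φ (ψ - φ) j t ≤ 1 := by
  have e : ∑ j, NN φ (ψ - φ) j t
      = ∑ p : Fin dA × Fin dB, Complex.normSq ((φ + (t:ℂ) • (ψ - φ)) p) := by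
    rw [Fintype.sum_prod_type]
    refine Finset.sum_congr rfl fun j _ => Finset.sum_congr rfl fun b _ => ?_
    simp [PiLp.add_apply, PiLp.smul_apply, smul_eq_mul]
  rw [e, sum_normSq_eq_norm_sq]
  have hcomb : φ + (t:ℂ) • (ψ - φ) = ((1 - t : ℝ) : ℂ) • φ + ((t : ℝ) : ℂ) • ψ := by
    push_cast
    module
  have hle : ‖φ + (t:ℂ) • (ψ - φ)‖ ≤ 1 := by
    rw [hcomb]
    calc ‖((1 - t : ℝ) : ℂ) • φ + ((t : ℝ) : ℂ) • ψ‖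
        ≤ ‖((1 - t : ℝ) : ℂ) • φ‖ + ‖((t : ℝ) : ℂ) • ψ‖ := norm_add_le _ _
      _ = |1 - t| * ‖φ‖ + |t| * ‖ψ‖ := by
          rw [norm_smul, norm_smul, Complex.norm_real, Complex.norm_real,
            Real.norm_eq_abs, Real.norm_eq_abs]
      _ = 1 := by
          rw [hφ, hψ, abs_of_nonneg (by linarith : (0:ℝ) ≤ 1 - t), abs_of_nonneg ht0]
          ring
  calc ‖φ + (t:ℂ) • (ψ - φ)‖ ^ 2 ≤ 1 ^ 2 :=
        pow_le_pow_left₀ (norm_nonneg _) hle 2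
    _ = 1 := one_pow 2

end MEL

lemma measuredEntropy_eq (dA dB : ℕ) (v : EuclideanSpace ℂ (Fin dA × Fin dB)) :
    measuredEntropy dA dB v
      = ∑ j, Real.negMulLog (∑ b, Complex.normSq (v (j, b))) / Real.log 2 := by
  unfold measuredEntropy
  refine Finset.sum_congr rfl fun j _ => ?_
  have hr : ((QIT.ptraceB (QIT.pureDM v)) j j).re = ∑ b, Complex.normSq (v (j, b)) := by
    simp only [QIT.ptraceB, QIT.pureDM, Matrix.of_apply, Complex.re_sum]
    refine Finset.sum_congr rfl fun b _ => ?_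
    rw [Complex.mul_conj, Complex.ofReal_re]
  rw [hr, Real.negMulLog, ← Real.log_div_log]
  ring

open Real Finset in
theorem measured_entropy_lipschitz (dA dB : ℕ) (hA : 3 ≤ dA) :
    ∀ φ ψ : EuclideanSpace ℂ (Fin dA × Fin dB), ‖φ‖ = 1 → ‖ψ‖ = 1 →
      |measuredEntropy dA dB φ - measuredEntropy dA dB ψ|
        ≤ Real.sqrt 8 * Real.logb 2 dA * ‖φ - ψ‖ := by
  intro φ ψ hφ hψ
  have hlog2pos : (0:ℝ) < Real.log 2 := Real.log_pos (by norm_num)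
  have hdA1 : (1:ℝ) ≤ (dA:ℝ) := by exact_mod_cast (by omega : 1 ≤ dA)
  have hLpos : 0 ≤ Real.log dA := Real.log_nonneg hdA1
  set dv : EuclideanSpace ℂ (Fin dA × Fin dB) := ψ - φ with hdv
  set f : ℝ → ℝ := fun t => ∑ j, Real.negMulLog (MEL.NN φ dv j t) / Real.log 2 with hf
  have hfderiv : ∀ t : ℝ, HasDerivAt f (∑ j, MEL.DD φ dv j t) t := fun t =>
    HasDerivAt.fun_sum fun j _ => MEL.hasDerivAt_DD φ dv j t
  set K : ℝ := Real.sqrt 8 * Real.logb 2 dA * ‖φ - ψ‖ with hK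
  have hbound : ∀ t ∈ Set.Icc (0:ℝ) 1, |∑ j, MEL.DD φ dv j t| ≤ K := by
    intro t ht
    have hxnn : ∀ j, 0 ≤ MEL.NN φ dv j t := fun j => MEL.NN_nonneg φ dv j t
    have hxsum : ∑ j, MEL.NN φ dv j t ≤ 1 := by
      rw [hdv]; exact MEL.NN_sum_le φ ψ hφ hψ ht.1 ht.2
    have hkey : ∑ j, MEL.NN φ dv j t * (1 + Real.log (MEL.NN φ dv j t)) ^ 2
        ≤ 2 * Real.log dA ^ 2 := key_sum hA _ hxnn hxsum
    have hCsum : ∑ j, MEL.CC dv j = ‖φ - ψ‖ ^ 2 := by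
      rw [MEL.CC_sum, hdv, norm_sub_rev]
    -- Cauchy-Schwarz
    have hcs : (∑ j, Real.sqrt (MEL.NN φ dv j t * (1 + Real.log (MEL.NN φ dv j t)) ^ 2)
          * Real.sqrt (MEL.CC dv j))
        ≤ Real.sqrt (∑ j, MEL.NN φ dv j t * (1 + Real.log (MEL.NN φ dv j t)) ^ 2)
          * Real.sqrt (∑ j, MEL.CC dv j) := by
      have h1 := Finset.sum_mul_sq_le_sq_mul_sq Finset.univ
        (fun j => Real.sqrt (MEL.NN φ dv j t * (1 + Real.log (MEL.NN φ dv j t)) ^ 2))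
        (fun j => Real.sqrt (MEL.CC dv j))
      have h2 : ∀ j : Fin dA,
          Real.sqrt (MEL.NN φ dv j t * (1 + Real.log (MEL.NN φ dv j t)) ^ 2) ^ 2
            = MEL.NN φ dv j t * (1 + Real.log (MEL.NN φ dv j t)) ^ 2 := fun j =>
        Real.sq_sqrt (mul_nonneg (hxnn j) (sq_nonneg _))
      have h3 : ∀ j : Fin dA, Real.sqrt (MEL.CC dv j) ^ 2 = MEL.CC dv j := fun j =>
        Real.sq_sqrt (MEL.CC_nonneg dv j)
      simp only [h2, h3] at h1
      have h4 : 0 ≤ ∑ j, Real.sqrt (MEL.NN φ dv j t * (1 + Real.log (MEL.NN φ dv j t)) ^ 2)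
          * Real.sqrt (MEL.CC dv j) :=
        Finset.sum_nonneg fun j _ => mul_nonneg (Real.sqrt_nonneg _) (Real.sqrt_nonneg _)
      rw [← Real.sqrt_mul (Finset.sum_nonneg fun j _ => mul_nonneg (hxnn j) (sq_nonneg _))]
      exact Real.abs_le_sqrt h1 |>.trans_eq' (abs_of_nonneg h4)
    calc |∑ j, MEL.DD φ dv j t| ≤ ∑ j, |MEL.DD φ dv j t| := Finset.abs_sum_le_sum_abs _ _
      _ ≤ ∑ j, 2 / Real.log 2
          * (Real.sqrt (MEL.NN φ dv j t * (1 + Real.log (MEL.NN φ dv j t)) ^ 2)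
            * Real.sqrt (MEL.CC dv j)) :=
          Finset.sum_le_sum fun j _ => MEL.DD_bound φ dv j t
      _ = 2 / Real.log 2 * ∑ j, Real.sqrt (MEL.NN φ dv j t
            * (1 + Real.log (MEL.NN φ dv j t)) ^ 2) * Real.sqrt (MEL.CC dv j) := by
          rw [Finset.mul_sum]
      _ ≤ 2 / Real.log 2 * (Real.sqrt (∑ j, MEL.NN φ dv j t
            * (1 + Real.log (MEL.NN φ dv j t)) ^ 2) * Real.sqrt (∑ j, MEL.CC dv j)) := by
          apply mul_le_mul_of_nonneg_left hcs (by positivity)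
      _ ≤ 2 / Real.log 2 * (Real.sqrt (2 * Real.log dA ^ 2) * Real.sqrt (‖φ - ψ‖ ^ 2)) := by
          apply mul_le_mul_of_nonneg_left _ (by positivity)
          apply mul_le_mul
          · exact Real.sqrt_le_sqrt hkey
          · rw [hCsum]
          · exact Real.sqrt_nonneg _
          · exact Real.sqrt_nonneg _
      _ = K := by
          rw [hK, Real.sqrt_sq (norm_nonneg _),
            Real.sqrt_mul (by norm_num : (0:ℝ) ≤ 2), Real.sqrt_sq hLpos,
            show (8:ℝ) = 2 ^ 2 * 2 by norm_num,
            Real.sqrt_mul (by positivity), Real.sqrt_sq (by norm_num : (0:ℝ) ≤ 2),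
            ← Real.log_div_log]
          field_simp
  have hMVT := norm_image_sub_le_of_norm_deriv_le_segment'
    (f := f) (f' := fun t => ∑ j, MEL.DD φ dv j t) (a := 0) (b := 1) (C := K)
    (fun t _ => (hfderiv t).hasDerivWithinAt)
    (fun t htt => hbound t (Set.Ico_subset_Icc_self htt))
    1 (Set.right_mem_Icc.mpr zero_le_one)
  have hf0 : f 0 = measuredEntropy dA dB φ := by
    rw [measuredEntropy_eq, hf]
    refine Finset.sum_congr rfl fun j _ => ?_
    congr 2
    unfold MEL.NN
    refine Finset.sum_congr rfl fun b _ => ?_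
    norm_num
  have hf1 : f 1 = measuredEntropy dA dB ψ := by
    rw [measuredEntropy_eq, hf]
    refine Finset.sum_congr rfl fun j _ => ?_
    congr 2
    unfold MEL.NN
    refine Finset.sum_congr rfl fun b _ => ?_
    rw [hdv]
    congr 1
    simp [PiLp.sub_apply]
  rw [Real.norm_eq_abs] at hMVT
  rw [abs_sub_comm, ← hf0, ← hf1]
  calc |f 1 - f 0| ≤ K * (1 - 0) := hMVT
    _ = K := by ring

end
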